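/- For density operators ρ, σ on a finite-dimensional Hilbert space and positive reals p, q, the fidelity satisfies √(pq)·F(ρ,σ) ≥ ½(p + q) − ½‖pρ − qσ‖₁, where F(ρ,σ) = ‖√ρ·√σ‖₁. -/

import Mathlib

open scoped ComplexOrder

/-- The square root of a positive semidefinite matrix, as `Matrix.PosSemidef.sqrt` was
defined in the older Mathlib (removed since). -/
noncomputable def Matrix.PosSemidef.sqrt {n : Type*} [Fintype n] [DecidableEq n] {𝕜 : Type*}
    [RCLike 𝕜] {A : Matrix n n 𝕜} (hA : A.PosSemidef) : Matrix n n 𝕜 :=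
  hA.1.eigenvectorUnitary.1 * Matrix.diagonal ((↑) ∘ (√·) ∘ hA.1.eigenvalues) *
    (star hA.1.eigenvectorUnitary : Matrix n n 𝕜)

namespace Matrix.PosSemidef
variable {m : Type*} [Fintype m] [DecidableEq m]

lemma sqrt_eq_cfc {A : Matrix m m ℂ} (hA : A.PosSemidef) : hA.sqrt = cfc Real.sqrt A := by
  rw [hA.1.cfc_eq, Matrix.IsHermitian.cfc, Unitary.conjStarAlgAut_apply]; rfl

lemma spec_nonneg {A : Matrix m m ℂ} (hA : A.PosSemidef) : ∀ x ∈ spectrum ℝ A, 0 ≤ x := by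
  rw [hA.1.spectrum_real_eq_range_eigenvalues]
  rintro _ ⟨i, rfl⟩
  exact hA.eigenvalues_nonneg i

lemma posSemidef_sqrt {A : Matrix m m ℂ} (hA : A.PosSemidef) : hA.sqrt.PosSemidef := by
  unfold Matrix.PosSemidef.sqrt
  have hd : (Matrix.diagonal ((↑) ∘ (√·) ∘ hA.1.eigenvalues : m → ℂ)).PosSemidef :=
    Matrix.posSemidef_diagonal_iff.mpr (fun i => by
      simp only [Function.comp_apply]
      exact Complex.zero_le_real.mpr (Real.sqrt_nonneg _))
  simpa [Matrix.star_eq_conjTranspose] using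
    hd.mul_mul_conjTranspose_same (hA.1.eigenvectorUnitary : Matrix m m ℂ)

lemma sqrt_mul_self {A : Matrix m m ℂ} (hA : A.PosSemidef) : hA.sqrt * hA.sqrt = A := by
  have hsa : IsSelfAdjoint A := hA.1
  rw [sqrt_eq_cfc, ← cfc_mul Real.sqrt Real.sqrt A]
  conv_rhs => rw [← cfc_id' ℝ A]
  exact cfc_congr (fun x hx => Real.mul_self_sqrt (hA.spec_nonneg x hx))

lemma sq_sqrt {A : Matrix m m ℂ} (hA : A.PosSemidef) : hA.sqrt ^ 2 = A := by
  rw [sq, hA.sqrt_mul_self]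

lemma eq_sqrt_of_sq_eq {A : Matrix m m ℂ} (hA : A.PosSemidef) {B : Matrix m m ℂ}
    (hB : B.PosSemidef) (hAB : A ^ 2 = B) : A = hB.sqrt := by
  have hsa : IsSelfAdjoint A := hA.1
  rw [sqrt_eq_cfc]
  subst hAB
  rw [← cfc_pow_id (R := ℝ) A 2, ← cfc_comp Real.sqrt (fun x => x ^ 2) A]
  conv_lhs => rw [← cfc_id' ℝ A]
  exact cfc_congr (fun x hx => (Real.sqrt_sq (hA.spec_nonneg x hx)).symm)

end Matrix.PosSemidef

/-- The operator absolute value `√(AᴴA)` of a matrix. -/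
noncomputable def matAbs {n : ℕ} (A : Matrix (Fin n) (Fin n) ℂ) : Matrix (Fin n) (Fin n) ℂ :=
  (Matrix.posSemidef_conjTranspose_mul_self A).sqrt

/-- The trace norm `‖A‖₁ = tr √(AᴴA)`. -/
noncomputable def traceNorm {n : ℕ} (A : Matrix (Fin n) (Fin n) ℂ) : ℝ :=
  ((matAbs A).trace).re

/-- The positive part `A⁺ = (|A| + A)/2` of a self-adjoint matrix `A`, so that
`A = A⁺ - A⁻` with `A⁺, A⁻ ≥ 0`. -/
noncomputable def matPosPart {n : ℕ} (A : Matrix (Fin n) (Fin n) ℂ) : Matrix (Fin n) (Fin n) ℂ :=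
  (2 : ℂ)⁻¹ • (matAbs A + A)

/-- A density operator: positive semidefinite with unit trace. -/
def IsDensity {n : ℕ} (ρ : Matrix (Fin n) (Fin n) ℂ) : Prop :=
  ρ.PosSemidef ∧ ρ.trace = 1

/-- A POVM with `r` outcomes: positive semidefinite effects summing to the identity. -/
def IsPOVM {n r : ℕ} (M : Fin r → Matrix (Fin n) (Fin n) ℂ) : Prop :=
  (∀ i, (M i).PosSemidef) ∧ ∑ i, M i = 1

/-- Success probability `∑ i, q i * tr (ρ i * M i)` of a measurement. -/
noncomputable def successProb {n r : ℕ} (q : Fin r → ℝ)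
    (ρ M : Fin r → Matrix (Fin n) (Fin n) ℂ) : ℝ :=
  ∑ i, q i * ((ρ i * M i).trace).re

/-- Optimal success probability under minimum-error discrimination. -/
noncomputable def optSuccess {n r : ℕ} (q : Fin r → ℝ)
    (ρ : Fin r → Matrix (Fin n) (Fin n) ℂ) : ℝ :=
  sSup {p | ∃ M, IsPOVM M ∧ p = successProb q ρ M}

/-- The fidelity `F(ρ,σ) = ‖√ρ √σ‖₁` of two positive semidefinite matrices. -/
noncomputable def fidelity {n : ℕ} {ρ σ : Matrix (Fin n) (Fin n) ℂ}
    (hρ : ρ.PosSemidef) (hσ : σ.PosSemidef) : ℝ :=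
  traceNorm (hρ.sqrt * hσ.sqrt)

section AuxPS
open Matrix
variable {n : ℕ}

lemma matAbs_eq {A B : Matrix (Fin n) (Fin n) ℂ} (h : Aᴴ * A = Bᴴ * B) :
    matAbs A = matAbs B :=
  (Matrix.posSemidef_conjTranspose_mul_self A).posSemidef_sqrt.eq_sqrt_of_sq_eq _
    (by rw [Matrix.PosSemidef.sq_sqrt, h])

lemma trace_psd_sqrt {A : Matrix (Fin n) (Fin n) ℂ} (hA : A.PosSemidef) :
    hA.sqrt.trace = ∑ i, (Real.sqrt (hA.1.eigenvalues i) : ℂ) := by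
  rw [Matrix.PosSemidef.sqrt, Matrix.trace_mul_cycle,
    (Matrix.mem_unitaryGroup_iff').mp hA.1.eigenvectorUnitary.2, one_mul, Matrix.trace_diagonal]
  rfl

lemma re_trace_le_of_diag (N : Matrix (Fin n) (Fin n) ℂ) (d : Fin n → ℝ)
    (h : Nᴴ * N = Matrix.diagonal (fun i => (d i : ℂ))) :
    (N.trace).re ≤ ∑ i, Real.sqrt (d i) := by
  rw [Matrix.trace]
  simp only [Complex.re_sum, Matrix.diag_apply]
  apply Finset.sum_le_sum
  intro i _
  have h2 : ((Nᴴ * N) i i) = ∑ j, (Complex.normSq (N j i) : ℂ) := by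
    simp [Matrix.mul_apply, Matrix.conjTranspose_apply, Complex.normSq_eq_conj_mul_self]
  have h1 : ((Nᴴ * N) i i) = (d i : ℂ) := by rw [h]; simp
  have h3 : d i = ∑ j, Complex.normSq (N j i) := by
    have h12 := h1.symm.trans h2
    have := congrArg Complex.re h12
    simpa using this
  have h4 : Complex.normSq (N i i) ≤ d i := by
    rw [h3]
    exact Finset.single_le_sum (f := fun j => Complex.normSq (N j i))
      (fun j _ => Complex.normSq_nonneg _) (Finset.mem_univ i)
  calc (N i i).re ≤ ‖N i i‖ := Complex.re_le_norm _
    _ = Real.sqrt (Complex.normSq (N i i)) := by rw [Complex.norm_def]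
    _ ≤ Real.sqrt (d i) := Real.sqrt_le_sqrt h4

lemma re_trace_le_traceNorm (M : Matrix (Fin n) (Fin n) ℂ) :
    (M.trace).re ≤ traceNorm M := by
  have hH : (Mᴴ * M).PosSemidef := Matrix.posSemidef_conjTranspose_mul_self M
  obtain ⟨V, hVmem⟩ : ∃ V : Matrix (Fin n) (Fin n) ℂ, V ∈ Matrix.unitaryGroup (Fin n) ℂ ∧
      Vᴴ * (Mᴴ * M) * V = Matrix.diagonal (fun i => ((hH.1.eigenvalues i : ℝ) : ℂ)) := by
    refine ⟨(hH.1.eigenvectorUnitary : Matrix (Fin n) (Fin n) ℂ),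
      hH.1.eigenvectorUnitary.2, ?_⟩
    have := hH.1.conjStarAlgAut_star_eigenvectorUnitary
    rw [Unitary.conjStarAlgAut_star_apply] at this
    rw [Matrix.star_eq_conjTranspose] at this
    rw [this]
    rfl
  obtain ⟨hVU, hVdiag⟩ := hVmem
  have hV1 : Vᴴ * V = 1 := by
    have := (Matrix.mem_unitaryGroup_iff').mp hVU
    rwa [Matrix.star_eq_conjTranspose] at this
  have hV2 : V * Vᴴ = 1 := by
    have := (Matrix.mem_unitaryGroup_iff).mp hVU
    rwa [Matrix.star_eq_conjTranspose] at this
  have key := re_trace_le_of_diag (Vᴴ * M * V) (hH.1.eigenvalues) ?_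
  · have htr : (Vᴴ * M * V).trace = M.trace := by
      rw [Matrix.trace_mul_cycle, hV2, Matrix.one_mul]
    rw [htr] at key
    refine key.trans (le_of_eq ?_)
    unfold traceNorm matAbs
    rw [trace_psd_sqrt hH]
    push_cast
    simp
  · rw [← hVdiag]
    have hexp : (Vᴴ * M * V)ᴴ = Vᴴ * Mᴴ * V := by
      simp [Matrix.conjTranspose_mul, Matrix.mul_assoc]
    rw [hexp]
    have : V * (Vᴴ * (M * V)) = M * V := by
      rw [← Matrix.mul_assoc, hV2, Matrix.one_mul]
    simp only [Matrix.mul_assoc]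
    rw [this]

lemma psd_re_diag_nonneg {A : Matrix (Fin n) (Fin n) ℂ} (hA : A.PosSemidef) (i : Fin n) :
    0 ≤ (A i i).re := by
  have := hA.re_dotProduct_nonneg (Pi.single i 1)
  simpa [dotProduct, Matrix.mulVec, Pi.single_apply, Finset.sum_ite_eq,
    Finset.sum_ite_eq'] using this

lemma trace_mul_diagonal (G : Matrix (Fin n) (Fin n) ℂ) (f : Fin n → ℂ) :
    (G * Matrix.diagonal f).trace = ∑ i, G i i * f i := by
  simp [Matrix.trace, Matrix.diag_apply, Matrix.mul_diagonal]

set_option maxHeartbeats 1000000 in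
lemma powers_stormer {A B : Matrix (Fin n) (Fin n) ℂ} (hA : A.PosSemidef) (hB : B.PosSemidef) :
    (A.trace).re + (B.trace).re - traceNorm (A - B)
      ≤ 2 * ((hA.sqrt * hB.sqrt).trace).re := by
  classical
  set S := hA.sqrt with hSdef
  set T := hB.sqrt with hTdef
  have hSps : S.PosSemidef := hA.posSemidef_sqrt
  have hTps : T.PosSemidef := hB.posSemidef_sqrt
  have hS2 : S * S = A := hA.sqrt_mul_self
  have hT2 : T * T = B := hB.sqrt_mul_self
  have hX : (S - T).IsHermitian := hSps.1.sub hTps.1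
  set d : Fin n → ℝ := hX.eigenvalues with hddef
  set W : Matrix (Fin n) (Fin n) ℂ := (hX.eigenvectorUnitary : Matrix (Fin n) (Fin n) ℂ)
    with hWdef
  have hW1 : Wᴴ * W = 1 := by
    have := (Matrix.mem_unitaryGroup_iff').mp hX.eigenvectorUnitary.2
    rwa [Matrix.star_eq_conjTranspose] at this
  have hW2 : W * Wᴴ = 1 := by
    have := (Matrix.mem_unitaryGroup_iff).mp hX.eigenvectorUnitary.2
    rwa [Matrix.star_eq_conjTranspose] at this
  have hspec : S - T = W * Matrix.diagonal (fun i => (d i : ℂ)) * Wᴴ := by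
    have := hX.spectral_theorem
    rw [Unitary.conjStarAlgAut_apply] at this
    rw [Matrix.star_eq_conjTranspose] at this
    exact this
  set s : Fin n → ℂ := fun i => if d i < 0 then -1 else 1 with hsdef
  have hsd : ∀ i, s i * (d i : ℂ) = ((|d i| : ℝ) : ℂ) := by
    intro i
    by_cases h : d i < 0
    · rw [abs_of_neg h]; simp [hsdef, h]
    · rw [abs_of_nonneg (not_lt.mp h)]; simp [hsdef, h]
  have hss : ∀ i, star (s i) * s i = 1 := by
    intro i
    by_cases h : d i < 0 <;> simp [hsdef, h]
  set U : Matrix (Fin n) (Fin n) ℂ := W * Matrix.diagonal s * Wᴴ with hUdef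
  set P : Matrix (Fin n) (Fin n) ℂ := W * Matrix.diagonal (fun i => ((|d i| : ℝ) : ℂ)) * Wᴴ
    with hPdef
  have hsandwich : ∀ f g : Fin n → ℂ,
      (W * Matrix.diagonal f * Wᴴ) * (W * Matrix.diagonal g * Wᴴ)
        = W * Matrix.diagonal (fun i => f i * g i) * Wᴴ := by
    intro f g
    calc (W * Matrix.diagonal f * Wᴴ) * (W * Matrix.diagonal g * Wᴴ)
        = W * Matrix.diagonal f * (Wᴴ * W) * Matrix.diagonal g * Wᴴ := by
          simp only [Matrix.mul_assoc]
      _ = W * (Matrix.diagonal f * Matrix.diagonal g) * Wᴴ := by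
          rw [hW1]; simp only [Matrix.mul_one, Matrix.mul_assoc]
      _ = W * Matrix.diagonal (fun i => f i * g i) * Wᴴ := by
          rw [Matrix.diagonal_mul_diagonal]
  have hUX : U * (S - T) = P := by
    rw [hUdef, hspec, hsandwich, hPdef]
    have : (fun i => s i * (d i : ℂ)) = fun i => ((|d i| : ℝ) : ℂ) := funext hsd
    rw [this]
  have hXU : (S - T) * U = P := by
    rw [hUdef, hspec, hsandwich, hPdef]
    have : (fun i => (d i : ℂ) * s i) = fun i => ((|d i| : ℝ) : ℂ) := by
      funext i; rw [mul_comm]; exact hsd i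
    rw [this]
  have hUunit : Uᴴ * U = 1 := by
    have hUH : Uᴴ = W * Matrix.diagonal (fun i => star (s i)) * Wᴴ := by
      rw [hUdef]
      simp only [Matrix.conjTranspose_mul, Matrix.diagonal_conjTranspose,
        Matrix.conjTranspose_conjTranspose]
      simp [Matrix.mul_assoc, Pi.star_def]
    rw [hUH, hUdef, hsandwich]
    have : (fun i => star (s i) * s i) = fun _ => (1 : ℂ) := funext hss
    rw [this, Matrix.diagonal_one, Matrix.mul_one, hW2]
  -- trace of X² equals sum of d i ^ 2
  have htrX2 : (((S - T) * (S - T)).trace).re = ∑ i, (d i) ^ 2 := by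
    rw [hspec, hsandwich, Matrix.trace_mul_cycle, hW1, Matrix.one_mul,
      Matrix.trace_diagonal]
    push_cast
    simp [Complex.re_sum, sq]
  -- G = Wᴴ (S+T) W
  set G : Matrix (Fin n) (Fin n) ℂ := Wᴴ * (S + T) * W with hGdef
  have hGbound : ∀ i, |d i| ≤ (G i i).re := by
    intro i
    have hYmX : (S + T) - (S - T) = T + T := by abel
    have hYpX : (S + T) + (S - T) = S + S := by abel
    have h1 : (Wᴴ * ((S + T) - (S - T)) * W).PosSemidef := by
      rw [hYmX]
      simpa using (hTps.add hTps).conjTranspose_mul_mul_same W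
    have h2 : (Wᴴ * ((S + T) + (S - T)) * W).PosSemidef := by
      rw [hYpX]
      simpa using (hSps.add hSps).conjTranspose_mul_mul_same W
    have hconj : Wᴴ * (S - T) * W = Matrix.diagonal (fun i => (d i : ℂ)) := by
      rw [hspec]
      calc Wᴴ * (W * Matrix.diagonal (fun i => (d i : ℂ)) * Wᴴ) * W
          = (Wᴴ * W) * Matrix.diagonal (fun i => (d i : ℂ)) * (Wᴴ * W) := by
            simp only [Matrix.mul_assoc]
        _ = Matrix.diagonal (fun i => (d i : ℂ)) := by
            rw [hW1]; simp
    have e1 : Wᴴ * ((S + T) - (S - T)) * W = G - Matrix.diagonal (fun i => (d i : ℂ)) := by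
      rw [hGdef, ← hconj]
      simp only [Matrix.sub_mul, Matrix.mul_sub]
    have e2 : Wᴴ * ((S + T) + (S - T)) * W = G + Matrix.diagonal (fun i => (d i : ℂ)) := by
      rw [hGdef, ← hconj]
      simp only [Matrix.add_mul, Matrix.mul_add]
    rw [e1] at h1
    rw [e2] at h2
    have b1 := psd_re_diag_nonneg h1 i
    have b2 := psd_re_diag_nonneg h2 i
    simp only [Matrix.sub_apply, Matrix.add_apply, Matrix.diagonal_apply_eq,
      Complex.sub_re, Complex.add_re, Complex.ofReal_re] at b1 b2
    rw [abs_le]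
    constructor <;> linarith
  -- trace (P * (S+T)) real part
  have htrPY : ((P * (S + T)).trace).re = ∑ i, |d i| * (G i i).re := by
    have step : (P * (S + T)).trace = (G * Matrix.diagonal (fun i => ((|d i| : ℝ) : ℂ))).trace := by
      rw [hPdef, hGdef]
      rw [show W * Matrix.diagonal (fun i => ((|d i| : ℝ) : ℂ)) * Wᴴ * (S + T)
          = (W * Matrix.diagonal (fun i => ((|d i| : ℝ) : ℂ))) * (Wᴴ * (S + T)) from by
        rw [Matrix.mul_assoc]]
      rw [Matrix.trace_mul_comm]
      simp only [Matrix.mul_assoc]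
    rw [step, trace_mul_diagonal]
    rw [Complex.re_sum]
    congr 1
    funext i
    simp [Complex.mul_re, Complex.ofReal_re, Complex.ofReal_im, mul_comm]
  -- sum d² ≤ sum |d| * G
  have hsum : ∑ i, (d i) ^ 2 ≤ ∑ i, |d i| * (G i i).re := by
    apply Finset.sum_le_sum
    intro i _
    have : (d i) ^ 2 = |d i| * |d i| := by rw [← sq_abs, sq]
    rw [this]
    exact mul_le_mul_of_nonneg_left (hGbound i) (abs_nonneg _)
  -- trace (U * (A - B)) = trace (P * (S+T))
  have htrU : (U * (A - B)).trace = (P * (S + T)).trace := by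
    have hXY : (S - T) * (S + T) + (S + T) * (S - T) = (A - B) + (A - B) := by
      simp only [Matrix.sub_mul, Matrix.mul_sub, Matrix.add_mul, Matrix.mul_add, hS2, hT2]
      abel
    have e1 : (U * ((S - T) * (S + T))).trace = (P * (S + T)).trace := by
      rw [← Matrix.mul_assoc, hUX]
    have e3 : (U * ((S + T) * (S - T))).trace = (P * (S + T)).trace := by
      rw [← Matrix.mul_assoc, Matrix.trace_mul_cycle, hXU]
    have hsum2 : (U * ((S - T) * (S + T))).trace + (U * ((S + T) * (S - T))).trace
        = (U * (A - B)).trace + (U * (A - B)).trace := by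
      rw [← Matrix.trace_add, ← Matrix.mul_add, hXY, Matrix.mul_add, Matrix.trace_add]
    rw [e1, e3] at hsum2
    have h2' : 2 * (P * (S + T)).trace = 2 * (U * (A - B)).trace := by
      rw [two_mul, two_mul, hsum2]
    exact (mul_left_cancel₀ (two_ne_zero) h2').symm
  -- traceNorm (U * (A-B)) = traceNorm (A - B)
  have habs : matAbs (U * (A - B)) = matAbs (A - B) := by
    apply matAbs_eq
    rw [Matrix.conjTranspose_mul]
    calc (A - B)ᴴ * Uᴴ * (U * (A - B)) = (A - B)ᴴ * (Uᴴ * U) * (A - B) := by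
          simp only [Matrix.mul_assoc]
      _ = (A - B)ᴴ * (A - B) := by rw [hUunit]; simp [Matrix.mul_assoc]
  have htn : traceNorm (U * (A - B)) = traceNorm (A - B) := by
    unfold traceNorm
    rw [habs]
  -- chain
  have key : (A.trace).re + (B.trace).re - 2 * ((S * T).trace).re
      = (((S - T) * (S - T)).trace).re := by
    have hexp2 : (S - T) * (S - T) = A + B - (S * T + T * S) := by
      simp only [Matrix.sub_mul, Matrix.mul_sub, hS2, hT2]
      abel
    rw [hexp2]
    have : (A + B - (S * T + T * S)).trace = A.trace + B.trace - (S * T).trace - (T * S).trace := by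
      simp [Matrix.trace_sub, Matrix.trace_add]
      ring
    rw [this, Matrix.trace_mul_comm T S]
    simp [Complex.sub_re, Complex.add_re]
    ring
  have final : (((S - T) * (S - T)).trace).re ≤ traceNorm (A - B) := by
    rw [htrX2]
    calc ∑ i, (d i) ^ 2 ≤ ∑ i, |d i| * (G i i).re := hsum
      _ = ((P * (S + T)).trace).re := htrPY.symm
      _ = ((U * (A - B)).trace).re := by rw [htrU]
      _ ≤ traceNorm (U * (A - B)) := re_trace_le_traceNorm _
      _ = traceNorm (A - B) := htn
  linarith [key, final]

variable {n : ℕ}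

lemma psd_smul {A : Matrix (Fin n) (Fin n) ℂ} (hA : A.PosSemidef) {c : ℝ} (hc : 0 ≤ c) :
    ((c : ℂ) • A).PosSemidef := by
  exact hA.smul (Complex.zero_le_real.mpr hc)

lemma sqrt_smul {A : Matrix (Fin n) (Fin n) ℂ} (hA : A.PosSemidef) {c : ℝ} (hc : 0 ≤ c)
    (h : ((c : ℂ) • A).PosSemidef) :
    h.sqrt = ((Real.sqrt c : ℝ) : ℂ) • hA.sqrt := by
  refine (Matrix.PosSemidef.eq_sqrt_of_sq_eq (psd_smul hA.posSemidef_sqrt (Real.sqrt_nonneg c))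
    h ?_).symm
  rw [pow_two, Matrix.smul_mul, Matrix.mul_smul, smul_smul, hA.sqrt_mul_self,
    ← Complex.ofReal_mul, Real.mul_self_sqrt hc]

end AuxPS

theorem stmt16 {n : ℕ} {ρ σ : Matrix (Fin n) (Fin n) ℂ} (p q : ℝ)
    (hρ : IsDensity ρ) (hσ : IsDensity σ) (hp : 0 < p) (hq : 0 < q) :
    Real.sqrt (p * q) * fidelity hρ.1 hσ.1
      ≥ (1 / 2) * (p + q) - (1 / 2) * traceNorm ((p : ℂ) • ρ - (q : ℂ) • σ) := by
  have hA : ((p : ℂ) • ρ).PosSemidef := psd_smul hρ.1 hp.le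
  have hB : ((q : ℂ) • σ).PosSemidef := psd_smul hσ.1 hq.le
  have hps := powers_stormer hA hB
  have htrA : (((p : ℂ) • ρ).trace).re = p := by
    rw [Matrix.trace_smul, hρ.2]; simp
  have htrB : (((q : ℂ) • σ).trace).re = q := by
    rw [Matrix.trace_smul, hσ.2]; simp
  have hsq : hA.sqrt * hB.sqrt
      = ((Real.sqrt (p * q) : ℝ) : ℂ) • (hρ.1.sqrt * hσ.1.sqrt) := by
    rw [sqrt_smul hρ.1 hp.le hA, sqrt_smul hσ.1 hq.le hB,
      Matrix.smul_mul, Matrix.mul_smul, smul_smul, ← Complex.ofReal_mul,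
      ← Real.sqrt_mul hp.le]
  have htr : ((hA.sqrt * hB.sqrt).trace).re
      = Real.sqrt (p * q) * ((hρ.1.sqrt * hσ.1.sqrt).trace).re := by
    rw [hsq, Matrix.trace_smul, smul_eq_mul, Complex.re_ofReal_mul]
  have hF : ((hρ.1.sqrt * hσ.1.sqrt).trace).re ≤ fidelity hρ.1 hσ.1 :=
    re_trace_le_traceNorm _
  have h2 : Real.sqrt (p * q) * ((hρ.1.sqrt * hσ.1.sqrt).trace).re
      ≤ Real.sqrt (p * q) * fidelity hρ.1 hσ.1 :=
    mul_le_mul_of_nonneg_left hF (Real.sqrt_nonneg _)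
  rw [htrA, htrB, htr] at hps
  linarith
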